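/- arXiv:2504.18098 — 2 statements merged into one kernel-verified Lean document; each statement's English description precedes it below -/
import Mathlib

section
/- The witness W_2 can fail to detect magic that the stabilizer norm detects: for the depolarized single-qubit T-state at p = 1/5, namely ρ = (4/5)|T⟩⟨T| + (1/10)I₂, one has D(ρ) > 1 (so ρ is a nonstabilizer state) while W_2(ρ) < 0. -/
open Matrix Complex BigOperators
open scoped ComplexOrder

noncomputable section

/-- Index type for `n` qubits: functions `Fin n → Fin 2` (cardinality `2^n`). -/
abbrev QIdx (n : ℕ) := Fin n → Fin 2

/-- The four single-qubit Pauli matrices: `σ⁰ = I`, `σ¹ = σˣ`, `σ² = σᶻ`, `σ³ = σʸ`. -/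
def pauliMat : Fin 4 → Matrix (Fin 2) (Fin 2) ℂ
  | 0 => 1
  | 1 => !![0, 1; 1, 0]
  | 2 => !![1, 0; 0, -1]
  | 3 => !![0, -Complex.I; Complex.I, 0]

/-- The Pauli string `σ^{a_1} ⊗ ⋯ ⊗ σ^{a_n}` as a `2^n × 2^n` matrix. -/
def pauliString {n : ℕ} (a : Fin n → Fin 4) : Matrix (QIdx n) (QIdx n) ℂ :=
  fun i j => ∏ k, pauliMat (a k) (i k) (j k)

/-- An `n`-qubit state: positive semidefinite with unit trace. -/
def IsState {n : ℕ} (ρ : Matrix (QIdx n) (QIdx n) ℂ) : Prop :=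
  ρ.PosSemidef ∧ ρ.trace = 1

/-- The `α`-moment of the Pauli spectrum `A_α(ρ) = 2^{-n} ∑_P |tr(ρP)|^{2α}`. -/
def Amom {n : ℕ} (α : ℝ) (ρ : Matrix (QIdx n) (QIdx n) ℂ) : ℝ :=
  ((2:ℝ)^n)⁻¹ * ∑ a : Fin n → Fin 4, (‖(ρ * pauliString a).trace‖) ^ (2 * α)

/-- The 2-Rényi entropy `S₂(ρ) = -ln tr(ρ²)`. -/
def S2 {n : ℕ} (ρ : Matrix (QIdx n) (QIdx n) ℂ) : ℝ :=
  - Real.log ((ρ * ρ).trace.re)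

/-- The magic witness `W_α(ρ) = (1/(1-α)) ln A_α(ρ) - ((1-2α)/(1-α)) S₂(ρ)`. -/
def Wit {n : ℕ} (α : ℝ) (ρ : Matrix (QIdx n) (QIdx n) ℂ) : ℝ :=
  (1 / (1 - α)) * Real.log (Amom α ρ) - ((1 - 2*α)/(1 - α)) * S2 ρ

/-- The stabilizer norm `D(ρ) = A_{1/2}(ρ) = 2^{-n} ∑_P |tr(ρP)|`. -/
def Dnorm {n : ℕ} (ρ : Matrix (QIdx n) (QIdx n) ℂ) : ℝ :=
  Amom (1/2) ρ

/-- A Clifford unitary: unitary mapping every Pauli string to `±` a Pauli string. -/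
def IsCliffordUnitary {n : ℕ} (U : Matrix (QIdx n) (QIdx n) ℂ) : Prop :=
  U ∈ Matrix.unitaryGroup (QIdx n) ℂ ∧
    ∀ a : Fin n → Fin 4, ∃ (b : Fin n → Fin 4) (ε : ℝ),
      (ε = 1 ∨ ε = -1) ∧ U * pauliString a * Uᴴ = (ε : ℂ) • pauliString b

/-- The computational all-zeros basis vector `|0⟩^{⊗n}`. -/
def zeroVec (n : ℕ) : QIdx n → ℂ :=
  fun i => if (∀ k, i k = 0) then 1 else 0

/-- A pure stabilizer state vector: `U|0⟩^{⊗n}` for a Clifford unitary `U`. -/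
def IsPureStab {n : ℕ} (ψ : QIdx n → ℂ) : Prop :=
  ∃ U, IsCliffordUnitary U ∧ ψ = U.mulVec (zeroVec n)

/-- The rank-one projector `|ψ⟩⟨ψ|`. -/
def proj {n : ℕ} (ψ : QIdx n → ℂ) : Matrix (QIdx n) (QIdx n) ℂ :=
  Matrix.vecMulVec ψ (star ψ)

/-- A mixed stabilizer state: a finite convex combination of pure stabilizer projectors. -/
def IsMixedStab {n : ℕ} (ρ : Matrix (QIdx n) (QIdx n) ℂ) : Prop :=
  ∃ (k : ℕ) (p : Fin k → ℝ) (ψ : Fin k → QIdx n → ℂ),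
    (∀ i, 0 ≤ p i) ∧ (∑ i, p i = 1) ∧ (∀ i, IsPureStab (ψ i)) ∧
    ρ = ∑ i, (p i : ℂ) • proj (ψ i)

/-- The set of values `ln ∑ᵢ |xᵢ|` over finite real stabilizer decompositions of `ρ`. -/
def StabDecomps {n : ℕ} (ρ : Matrix (QIdx n) (QIdx n) ℂ) : Set ℝ :=
  { r | ∃ (k : ℕ) (x : Fin k → ℝ) (ψ : Fin k → QIdx n → ℂ),
      (∀ i, IsPureStab (ψ i)) ∧ ρ = ∑ i, (x i : ℂ) • proj (ψ i) ∧
      r = Real.log (∑ i, |x i|) }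

/-- The log-free robustness of magic. -/
def LR {n : ℕ} (ρ : Matrix (QIdx n) (QIdx n) ℂ) : ℝ := sInf (StabDecomps ρ)

open Classical in
/-- Positive-semidefinite square root (junk value `0` off the PSD cone). -/
def psdSqrt {n : ℕ} (A : Matrix (QIdx n) (QIdx n) ℂ) : Matrix (QIdx n) (QIdx n) ℂ :=
  if h : A.PosSemidef then
    (h.1.eigenvectorUnitary : Matrix (QIdx n) (QIdx n) ℂ) *
      diagonal (((↑) : ℝ → ℂ) ∘ Real.sqrt ∘ h.1.eigenvalues) *
      (star h.1.eigenvectorUnitary : Matrix (QIdx n) (QIdx n) ℂ)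
  else 0

/-- The Uhlmann fidelity `F(ρ,σ) = (tr √(√ρ σ √ρ))²`. -/
def fidelity {n : ℕ} (ρ σ : Matrix (QIdx n) (QIdx n) ℂ) : ℝ :=
  ((psdSqrt (psdSqrt ρ * σ * psdSqrt ρ)).trace.re) ^ 2

/-- The stabilizer fidelity `D_F(ρ) = inf { -ln F(ρ,σ) : σ a mixed stabilizer state }`. -/
def DF {n : ℕ} (ρ : Matrix (QIdx n) (QIdx n) ℂ) : ℝ :=
  sInf { r | ∃ σ, IsMixedStab σ ∧ r = - Real.log (fidelity ρ σ) }

/-- Filtered Pauli moment `Ã_α(ρ) = (2^n A_α(ρ) - 1)/(2^n - 1)`. -/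
def Atil {n : ℕ} (α : ℝ) (ρ : Matrix (QIdx n) (QIdx n) ℂ) : ℝ :=
  ((2:ℝ)^n * Amom α ρ - 1) / ((2:ℝ)^n - 1)

/-- Filtered stabilizer norm `D̃(ρ) = (2^n D(ρ) - 1)/(2^n - 1)`. -/
def Dtil {n : ℕ} (ρ : Matrix (QIdx n) (QIdx n) ℂ) : ℝ :=
  ((2:ℝ)^n * Dnorm ρ - 1) / ((2:ℝ)^n - 1)

/-- Filtered magic witness `W̃_α(ρ) = (1/(1-α)) ln Ã_α(ρ) + ((1-2α)/(1-α)) ln Ã₁(ρ)`. -/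
def Wtil {n : ℕ} (α : ℝ) (ρ : Matrix (QIdx n) (QIdx n) ℂ) : ℝ :=
  (1/(1-α)) * Real.log (Atil α ρ) + ((1 - 2*α)/(1-α)) * Real.log (Atil 1 ρ)

/-- The maximally mixed state `I/2^n`. -/
def maxMixed (n : ℕ) : Matrix (QIdx n) (QIdx n) ℂ := ((2:ℂ)^n)⁻¹ • 1

/-- The single-qubit T-state vector `|T⟩ = (|0⟩ + e^{-iπ/4}|1⟩)/√2`. -/
def Tket : QIdx 1 → ℂ :=
  fun i => if i 0 = 0 then (Real.sqrt 2 : ℂ)⁻¹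
           else Complex.exp (-(Real.pi/4 : ℂ) * Complex.I) * (Real.sqrt 2 : ℂ)⁻¹

/-- The depolarized T-state `ρ_p = (1-p)|T⟩⟨T| + p·I₂/2`. -/
def rhoDep (p : ℝ) : Matrix (QIdx 1) (QIdx 1) ℂ :=
  ((1 - p : ℝ) : ℂ) • proj Tket + ((p : ℝ) : ℂ) • (((2:ℂ))⁻¹ • 1)




def z0 : QIdx 1 := fun _ => 0
def z1 : QIdx 1 := fun _ => 1

lemma fin2cases (x : Fin 2) : x = 0 ∨ x = 1 := by omega

lemma qidx_cases (i : QIdx 1) : i = z0 ∨ i = z1 := by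
  have h : i = fun _ => i 0 := by funext k; rw [Subsingleton.elim k 0]
  rcases fin2cases (i 0) with h0 | h0
  · left; rw [h, h0]; rfl
  · right; rw [h, h0]; rfl

lemma sum_qidx {M : Type*} [AddCommMonoid M] (g : QIdx 1 → M) : ∑ i, g i = g z0 + g z1 := by
  rw [← (Equiv.funUnique (Fin 1) (Fin 2)).symm.sum_comp g, Fin.sum_univ_two]
  rfl

def pc (k : Fin 4) : Fin 1 → Fin 4 := fun _ => k

lemma sum_pidx {M : Type*} [AddCommMonoid M] (g : (Fin 1 → Fin 4) → M) :
    ∑ a, g a = g (pc 0) + g (pc 1) + g (pc 2) + g (pc 3) := by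
  rw [← (Equiv.funUnique (Fin 1) (Fin 4)).symm.sum_comp g, Fin.sum_univ_four]
  rfl

lemma pstr_apply (a : Fin 1 → Fin 4) (i j : QIdx 1) :
    pauliString a i j = pauliMat (a 0) (i 0) (j 0) := by
  simp [pauliString, Fin.prod_univ_one]

lemma trace_eq (M : Matrix (QIdx 1) (QIdx 1) ℂ) : M.trace = M z0 z0 + M z1 z1 := by
  simp only [Matrix.trace, Matrix.diag]
  exact sum_qidx _

lemma mul_trace (M N : Matrix (QIdx 1) (QIdx 1) ℂ) :
    (M * N).trace = M z0 z0 * N z0 z0 + M z0 z1 * N z1 z0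
      + (M z1 z0 * N z0 z1 + M z1 z1 * N z1 z1) := by
  rw [trace_eq]
  simp only [Matrix.mul_apply, sum_qidx]


lemma z0_ne_z1 : (z0 : QIdx 1) ≠ z1 := by
  intro h; exact absurd (congrFun h 0) (by decide)

lemma exp_val : Complex.exp (-(Real.pi/4 : ℂ) * Complex.I)
    = ((Real.sqrt 2 / 2 : ℝ) : ℂ) * (1 - Complex.I) := by
  have h : (-(Real.pi/4 : ℂ)) = ((-(Real.pi/4) : ℝ) : ℂ) := by push_cast; ring
  rw [h, Complex.exp_mul_I, ← Complex.ofReal_cos, ← Complex.ofReal_sin,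
    Real.cos_neg, Real.sin_neg, Real.cos_pi_div_four, Real.sin_pi_div_four]
  push_cast; ring

lemma sq2 : ((Real.sqrt 2 : ℝ) : ℂ) * ((Real.sqrt 2 : ℝ) : ℂ) = 2 := by
  rw [← Complex.ofReal_mul, Real.mul_self_sqrt (by norm_num : (0:ℝ) ≤ 2)]; norm_num

lemma sq2_ne : ((Real.sqrt 2 : ℝ) : ℂ) ≠ 0 := by
  intro h; have := sq2; rw [h] at this; simp at this

lemma inv2 : (((Real.sqrt 2:ℝ)):ℂ)⁻¹ = ((Real.sqrt 2:ℝ):ℂ) / 2 := by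
  rw [eq_div_iff (by norm_num : (2:ℂ) ≠ 0), inv_mul_eq_div, div_eq_iff sq2_ne]
  exact sq2.symm

lemma Tket0 : Tket z0 = ((Real.sqrt 2:ℝ):ℂ) / 2 := by simp [Tket, z0, inv2]

lemma Tket1 : Tket z1 = (1 - Complex.I)/2 := by
  rw [Tket, if_neg (by decide), exp_val, inv2]
  push_cast
  linear_combination ((1 - Complex.I)/4) * sq2

lemma conj_T0 : (starRingEnd ℂ) (Tket z0) = ((Real.sqrt 2:ℝ):ℂ) / 2 := by
  rw [Tket0]; simp [map_ofNat]

lemma conj_T1 : (starRingEnd ℂ) (Tket z1) = (1 + Complex.I)/2 := by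
  rw [Tket1]; simp [map_ofNat]; try ring

lemma rho00 : rhoDep (1/5) z0 z0 = 1/2 := by
  simp only [rhoDep, proj, Matrix.add_apply, Matrix.smul_apply, Matrix.vecMulVec_apply,
    Matrix.one_apply_eq, Pi.star_apply, Complex.star_def, Tket0, smul_eq_mul, map_div₀, _root_.map_mul, _root_.map_sub, _root_.map_add, _root_.map_one,
    Complex.conj_I, Complex.conj_ofReal, map_ofNat]
  push_cast
  linear_combination (1/5) * sq2

lemma rho11 : rhoDep (1/5) z1 z1 = 1/2 := by
  simp only [rhoDep, proj, Matrix.add_apply, Matrix.smul_apply, Matrix.vecMulVec_apply,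
    Matrix.one_apply_eq, Pi.star_apply, Complex.star_def, Tket1, smul_eq_mul, map_div₀, _root_.map_mul, _root_.map_sub, _root_.map_add, _root_.map_one,
    Complex.conj_I, Complex.conj_ofReal, map_ofNat]
  push_cast
  linear_combination (-(1/5)) * Complex.I_sq

lemma rho01 : rhoDep (1/5) z0 z1 = ((Real.sqrt 2:ℝ):ℂ)/5 * (1 + Complex.I) := by
  simp only [rhoDep, proj, Matrix.add_apply, Matrix.smul_apply, Matrix.vecMulVec_apply,
    Matrix.one_apply_ne z0_ne_z1, Pi.star_apply, Complex.star_def, Tket0, Tket1, smul_eq_mul, map_div₀, _root_.map_mul, _root_.map_sub, _root_.map_add, _root_.map_one,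
    Complex.conj_I, Complex.conj_ofReal, map_ofNat]
  push_cast
  ring

lemma rho10 : rhoDep (1/5) z1 z0 = ((Real.sqrt 2:ℝ):ℂ)/5 * (1 - Complex.I) := by
  simp only [rhoDep, proj, Matrix.add_apply, Matrix.smul_apply, Matrix.vecMulVec_apply,
    Matrix.one_apply_ne (Ne.symm z0_ne_z1), Pi.star_apply, Complex.star_def, Tket0, Tket1,
    smul_eq_mul, map_div₀, _root_.map_mul, _root_.map_sub, _root_.map_add, _root_.map_one,
    Complex.conj_I, Complex.conj_ofReal, map_ofNat]
  push_cast
  ring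

lemma z00 : (z0 : QIdx 1) 0 = 0 := rfl
lemma z10 : (z1 : QIdx 1) 0 = 1 := rfl
lemma pc0 (k : Fin 4) : pc k 0 = k := rfl

lemma pm0 : pauliMat 0 = 1 := rfl
lemma pm1 : pauliMat 1 = !![0, 1; 1, 0] := rfl
lemma pm2 : pauliMat 2 = !![1, 0; 0, -1] := rfl
lemma pm3 : pauliMat 3 = !![0, -Complex.I; Complex.I, 0] := rfl

lemma tr0 : (rhoDep (1/5) * pauliString (pc 0)).trace = 1 := by
  rw [mul_trace]
  simp only [pstr_apply, pc0, z00, z10, pm0, Matrix.one_apply]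
  norm_num [rho00, rho01, rho10, rho11]

lemma tr1 : (rhoDep (1/5) * pauliString (pc 1)).trace = ((2 * Real.sqrt 2 / 5 : ℝ) : ℂ) := by
  rw [mul_trace]
  simp only [pstr_apply, pc0, z00, z10, pm1]
  norm_num [rho00, rho01, rho10, rho11]
  push_cast; ring

lemma tr2 : (rhoDep (1/5) * pauliString (pc 2)).trace = 0 := by
  rw [mul_trace]
  simp only [pstr_apply, pc0, z00, z10, pm2]
  norm_num [rho00, rho01, rho10, rho11]

lemma tr3 : (rhoDep (1/5) * pauliString (pc 3)).trace = -((2 * Real.sqrt 2 / 5 : ℝ) : ℂ) := by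
  rw [mul_trace]
  simp only [pstr_apply, pc0, z00, z10, pm3]
  norm_num [rho00, rho01, rho10, rho11]
  push_cast
  linear_combination (2 * ((Real.sqrt 2:ℝ):ℂ) / 5) * Complex.I_sq

lemma trsq : (rhoDep (1/5) * rhoDep (1/5)).trace = ((41/50 : ℝ) : ℂ) := by
  rw [mul_trace]
  rw [rho00, rho01, rho10, rho11]
  push_cast
  linear_combination ((2/25) * (1 - Complex.I^2)) * sq2 + (-(4/25)) * Complex.I_sq

lemma abs_t1 : ‖(((2 * Real.sqrt 2 / 5 : ℝ) : ℂ))‖ = 2 * Real.sqrt 2 / 5 := by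
  rw [Complex.norm_real, Real.norm_eq_abs, _root_.abs_of_nonneg (by positivity)]

lemma Dval : Dnorm (rhoDep (1/5)) = 1/2 + 2 * Real.sqrt 2 / 5 := by
  rw [Dnorm, Amom, sum_pidx (fun a => (‖(rhoDep (1/5) * pauliString a).trace‖) ^ (2 * (1/2:ℝ)))]
  rw [tr0, tr1, tr2, tr3]
  rw [show (2 * (1/2:ℝ)) = 1 by norm_num]
  simp only [Real.rpow_one, norm_one, norm_zero, norm_neg, abs_t1]
  norm_num
  ring

lemma D_gt_one : 1 < Dnorm (rhoDep (1/5)) := by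
  rw [Dval]
  nlinarith [Real.sq_sqrt (by norm_num : (0:ℝ) ≤ 2), Real.sqrt_nonneg 2]

lemma A2val : Amom 2 (rhoDep (1/5)) = 753/1250 := by
  rw [Amom, sum_pidx (fun a => (‖(rhoDep (1/5) * pauliString a).trace‖) ^ (2 * (2:ℝ)))]
  rw [tr0, tr1, tr2, tr3]
  rw [show (2 * (2:ℝ)) = ((4:ℕ):ℝ) by norm_num]
  simp only [Real.rpow_natCast, norm_one, norm_zero, norm_neg, abs_t1]
  have h : Real.sqrt 2 ^ 2 = 2 := Real.sq_sqrt (by norm_num)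
  rw [show (2 * Real.sqrt 2 / 5) ^ 4 = 16 * (Real.sqrt 2^2)^2 / 625 by ring, h]
  norm_num

lemma S2val : S2 (rhoDep (1/5)) = -Real.log (41/50) := by
  rw [S2, trsq, Complex.ofReal_re]

lemma Wit2_neg : Wit 2 (rhoDep (1/5)) < 0 := by
  rw [Wit, A2val, S2val]
  have h1 : Real.log ((41/50:ℝ)^3) < Real.log (753/1250) := by
    apply Real.log_lt_log (by norm_num)
    norm_num
  rw [Real.log_pow] at h1
  push_cast at h1
  norm_num
  nlinarith [h1]

lemma qidx_ext {i j : QIdx 1} (h : i 0 = j 0) : i = j := by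
  funext k; rw [Subsingleton.elim k 0, h]

lemma pstr_one : pauliString (pc 0) = 1 := by
  funext i j
  rw [pstr_apply, pc0, pm0]
  by_cases h : i = j
  · subst h; simp [Matrix.one_apply]
  · rw [Matrix.one_apply_ne h, Matrix.one_apply_ne (fun hc => h (qidx_ext hc))]

lemma zeroVec_z0 : zeroVec 1 z0 = 1 := by
  rw [zeroVec, if_pos]; intro k; rfl

lemma zeroVec_z1 : zeroVec 1 z1 = 0 := by
  rw [zeroVec, if_neg]; intro h; exact absurd (h 0) (by decide)

lemma projzero : proj (zeroVec 1) = (2⁻¹ : ℂ) • (1 + pauliString (pc 2)) := by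
  funext i j
  simp only [proj, Matrix.vecMulVec_apply, Pi.star_apply, Matrix.smul_apply, Matrix.add_apply,
    smul_eq_mul]
  rcases qidx_cases i with rfl | rfl <;> rcases qidx_cases j with rfl | rfl <;>
    simp [zeroVec_z0, zeroVec_z1, pstr_apply, pc0, z00, z10, pm2, Matrix.one_apply,
      z0_ne_z1, Ne.symm z0_ne_z1] <;> norm_num

lemma proj_mulVec (U : Matrix (QIdx 1) (QIdx 1) ℂ) (v : QIdx 1 → ℂ) :
    proj (U.mulVec v) = U * proj v * Uᴴ := by
  funext i j
  simp only [proj, Matrix.vecMulVec_apply, Pi.star_apply, Matrix.mulVec, dotProduct,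
    Matrix.mul_apply, Matrix.conjTranspose_apply, sum_qidx, star_add, star_mul']
  ring

lemma trP (k : Fin 4) : (pauliString (pc k)).trace = if k = 0 then 2 else 0 := by
  fin_cases k <;>
    simp [trace_eq, pstr_apply, pc, z00, z10, pm0, pm1, pm2, pm3, Matrix.one_apply] <;>
    norm_num

lemma trPP (k m : Fin 4) :
    (pauliString (pc k) * pauliString (pc m)).trace = if k = m then 2 else 0 := by
  fin_cases k <;> fin_cases m <;>
    (rw [mul_trace]; simp [pstr_apply, pc, z00, z10, pm0, pm1, pm2, pm3, Matrix.one_apply,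
      Complex.I_mul_I]) <;> ring_nf <;> simp [Complex.I_sq] <;> norm_num

lemma pureStab_sum {ψ : QIdx 1 → ℂ} (hψ : IsPureStab ψ) :
    ∑ a : Fin 1 → Fin 4, ‖(proj ψ * pauliString a).trace‖ ≤ 2 := by
  obtain ⟨U, ⟨hU, hCl⟩, rfl⟩ := hψ
  obtain ⟨b, ε, hε, hb⟩ := hCl (pc 2)
  have hUU : U * Uᴴ = 1 := by
    have := Matrix.mem_unitaryGroup_iff.mp hU
    rwa [Matrix.star_eq_conjTranspose] at this
  have hUU' : Uᴴ * U = 1 := by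
    have := Matrix.mem_unitaryGroup_iff'.mp hU
    rwa [Matrix.star_eq_conjTranspose] at this
  obtain ⟨b0, hbpc⟩ : ∃ k, b = pc k := ⟨b 0, by funext k; rw [Subsingleton.elim k 0]; rfl⟩
  rw [hbpc] at hb
  have hproj : proj (U.mulVec (zeroVec 1)) = (2⁻¹ : ℂ) • (1 + (ε:ℂ) • pauliString (pc b0)) := by
    rw [proj_mulVec, projzero]
    have h2 : U * ((2⁻¹ : ℂ) • (1 + pauliString (pc 2))) * Uᴴ
        = (2⁻¹ : ℂ) • (U * 1 * Uᴴ + U * pauliString (pc 2) * Uᴴ) := by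
      rw [mul_smul_comm, smul_mul_assoc, mul_add, add_mul, smul_add]
    rw [h2, mul_one, hUU, hb]
  have hb0ne : b0 ≠ 0 := by
    intro h0
    have h1 := congrArg Matrix.trace hb
    rw [Matrix.trace_mul_cycle, hUU', one_mul, Matrix.trace_smul, trP, trP, h0] at h1
    simp at h1
    rcases hε with rfl | rfl <;> norm_num at h1
  have tval : ∀ m : Fin 4, (proj (U.mulVec (zeroVec 1)) * pauliString (pc m)).trace
      = 2⁻¹ * ((if m = 0 then 2 else 0) + (ε:ℂ) * (if b0 = m then 2 else 0)) := by
    intro m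
    rw [hproj, smul_mul_assoc, add_mul, one_mul, smul_mul_assoc, Matrix.trace_smul,
      Matrix.trace_add, Matrix.trace_smul, trP, trPP]
    simp [smul_eq_mul]
  rw [sum_pidx (fun a => ‖(proj (U.mulVec (zeroVec 1)) * pauliString a).trace‖)]
  rw [tval 0, tval 1, tval 2, tval 3]
  have hb3 : b0 = 1 ∨ b0 = 2 ∨ b0 = 3 := by omega
  rcases hb3 with rfl | rfl | rfl <;> rcases hε with rfl | rfl <;>
    simp (config := { decide := true }) only [Fin.isValue] <;>
    norm_num [Fin.ext_iff, Complex.norm_two, norm_neg]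

lemma mixed_D_le {ρ : Matrix (QIdx 1) (QIdx 1) ℂ} (h : IsMixedStab ρ) : Dnorm ρ ≤ 1 := by
  obtain ⟨k, p, ψ, hp, hsum, hstab, rfl⟩ := h
  rw [Dnorm, Amom, show (2 * (1/2:ℝ)) = 1 by norm_num]
  simp only [Real.rpow_one, pow_one]
  have hle : ∀ a : Fin 1 → Fin 4,
      ‖((∑ i, (p i:ℂ) • proj (ψ i)) * pauliString a).trace‖
        ≤ ∑ i, p i * ‖(proj (ψ i) * pauliString a).trace‖ := by
    intro a
    rw [Matrix.sum_mul, Matrix.trace_sum]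
    refine le_trans (norm_sum_le _ _) ?_
    apply Finset.sum_le_sum
    intro i _
    rw [smul_mul_assoc, Matrix.trace_smul, smul_eq_mul, norm_mul, Complex.norm_real, Real.norm_eq_abs,
      _root_.abs_of_nonneg (hp i)]
  have h1 : ∑ a : Fin 1 → Fin 4,
      ‖((∑ i, (p i:ℂ) • proj (ψ i)) * pauliString a).trace‖ ≤ 2 := by
    calc ∑ a : Fin 1 → Fin 4, ‖((∑ i, (p i:ℂ) • proj (ψ i)) * pauliString a).trace‖
        ≤ ∑ a : Fin 1 → Fin 4, ∑ i, p i * ‖(proj (ψ i) * pauliString a).trace‖ :=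
          Finset.sum_le_sum (fun a _ => hle a)
      _ = ∑ i, ∑ a : Fin 1 → Fin 4, p i * ‖(proj (ψ i) * pauliString a).trace‖ :=
          Finset.sum_comm
      _ = ∑ i, p i * ∑ a : Fin 1 → Fin 4, ‖(proj (ψ i) * pauliString a).trace‖ := by
          simp [Finset.mul_sum]
      _ ≤ ∑ i, p i * 2 :=
          Finset.sum_le_sum (fun i _ =>
            mul_le_mul_of_nonneg_left (pureStab_sum (hstab i)) (hp i))
      _ = 2 := by rw [← Finset.sum_mul, hsum, one_mul]
  calc ((2:ℝ))⁻¹ * ∑ a : Fin 1 → Fin 4,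
        ‖((∑ i, (p i:ℂ) • proj (ψ i)) * pauliString a).trace‖
      ≤ (2:ℝ)⁻¹ * 2 := by
        apply mul_le_mul_of_nonneg_left h1 (by norm_num)
    _ = 1 := by norm_num


/-- at `p = 1/5` the depolarized T-state
`ρ = (4/5)|T⟩⟨T| + (1/10) I₂` has `D(ρ) > 1` (so it is a nonstabilizer state)
while `W₂(ρ) < 0`: the witness `W₂` fails to detect its magic. -/
theorem W2_fails_where_stabNorm_detects :
    1 < Dnorm (rhoDep (1/5)) ∧ ¬ IsMixedStab (rhoDep (1/5)) ∧
    Wit 2 (rhoDep (1/5)) < 0 :=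
  ⟨D_gt_one, fun h => absurd (mixed_D_le h) (not_le.mpr D_gt_one), Wit2_neg⟩

end
end

section
/- Let α ≥ 1 be an integer and define the 2^{2α} × 2^{2α} matrix ζ_α = (1/2)( I₂^{⊗2α} + (σ^x)^{⊗2α} + (σ^y)^{⊗2α} + (σ^z)^{⊗2α} ), where M^{⊗k} denotes the k-fold Kronecker power of a 2×2 matrix M. If α is odd then ζ_α² = I (the identity on dimension 2^{2α}), so ζ_α has eigenvalues in {+1,−1}; if α is even then ζ_α² = 2 ζ_α, so ζ_α/2 is a projector and ζ_α has eigenvalues in {0, 2}. -/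
open Matrix Complex BigOperators
open scoped ComplexOrder

noncomputable section

/-- The `k`-fold Kronecker power of a `2×2` matrix, as a matrix on `Fin k → Fin 2`. -/
def kronPow (M : Matrix (Fin 2) (Fin 2) ℂ) (k : ℕ) :
    Matrix (Fin k → Fin 2) (Fin k → Fin 2) ℂ :=
  fun i j => ∏ t, M (i t) (j t)

/-- `ζ_α = (1/2)(I₂^{⊗2α} + (σˣ)^{⊗2α} + (σʸ)^{⊗2α} + (σᶻ)^{⊗2α})`. -/
def zeta (α : ℕ) : Matrix (Fin (2*α) → Fin 2) (Fin (2*α) → Fin 2) ℂ :=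
  (2:ℂ)⁻¹ • (kronPow 1 (2*α) + kronPow (pauliMat 1) (2*α) +
    kronPow (pauliMat 3) (2*α) + kronPow (pauliMat 2) (2*α))

lemma kronPow_mul (M N : Matrix (Fin 2) (Fin 2) ℂ) (k : ℕ) :
    kronPow M k * kronPow N k = kronPow (M * N) k := by
  ext i j
  simp only [kronPow, Matrix.mul_apply, Finset.prod_univ_sum, Fintype.piFinset_univ,
    Finset.prod_mul_distrib]

lemma kronPow_smul (c : ℂ) (M : Matrix (Fin 2) (Fin 2) ℂ) (k : ℕ) :
    kronPow (c • M) k = c ^ k • kronPow M k := by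
  ext i j
  simp [kronPow, Finset.prod_mul_distrib, Finset.prod_const, Finset.card_univ]

lemma kronPow_one (k : ℕ) : kronPow (1 : Matrix (Fin 2) (Fin 2) ℂ) k = 1 := by
  ext i j
  by_cases h : i = j
  · subst h; simp [kronPow, Matrix.one_apply]
  · obtain ⟨t, ht⟩ : ∃ t, i t ≠ j t := by
      by_contra hc; push_neg at hc; exact h (funext hc)
    rw [Matrix.one_apply_ne h]
    exact Finset.prod_eq_zero (Finset.mem_univ t) (by simp [Matrix.one_apply, ht])

lemma spec_subset_of_quad {n : ℕ} (A : Matrix (QIdx n) (QIdx n) ℂ) (a b : ℂ)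
    (h : (A - a • 1) * (A - b • 1) = 0) : spectrum ℂ A ⊆ {a, b} := by
  intro μ hμ
  by_contra hc
  simp only [Set.mem_insert_iff, Set.mem_singleton_iff] at hc
  push_neg at hc
  obtain ⟨ha, hb⟩ := hc
  rw [spectrum.mem_iff] at hμ
  apply hμ
  have expand : (μ • (1 : Matrix (QIdx n) (QIdx n) ℂ) - A) * ((a + b - μ) • 1 - A)
      = (A - a • 1) * (A - b • 1) - ((μ - a) * (μ - b)) • 1 := by
    simp only [sub_mul, mul_sub, smul_mul_assoc, mul_smul_comm, smul_smul,
      mul_one, one_mul]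
    match_scalars <;> ring
  have key : (μ • (1 : Matrix (QIdx n) (QIdx n) ℂ) - A) * ((a + b - μ) • 1 - A)
      = (-((μ - a) * (μ - b))) • 1 := by
    rw [expand, h, zero_sub, neg_smul]
  have hc0 : (-((μ - a) * (μ - b))) ≠ 0 := by
    simp [sub_eq_zero, ha, hb]
  have hdet : (μ • (1 : Matrix (QIdx n) (QIdx n) ℂ) - A).det ≠ 0 := by
    intro h0
    have := congrArg Matrix.det key
    rw [Matrix.det_mul, h0, zero_mul] at this
    rw [Matrix.det_smul, Matrix.det_one, mul_one] at this
    exact hc0 (pow_eq_zero_iff (by positivity) |>.mp this.symm)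
  rw [Algebra.algebraMap_eq_smul_one]
  rw [Matrix.isUnit_iff_isUnit_det]
  exact isUnit_iff_ne_zero.mpr hdet

lemma pauli_xx : pauliMat 1 * pauliMat 1 = 1 := by
  ext i j; fin_cases i <;> fin_cases j <;>
    simp [pauliMat, Matrix.mul_apply, Fin.sum_univ_two, Matrix.one_apply]

lemma pauli_yy : pauliMat 3 * pauliMat 3 = 1 := by
  ext i j; fin_cases i <;> fin_cases j <;>
    simp [pauliMat, Matrix.mul_apply, Fin.sum_univ_two, Matrix.one_apply] <;> ring_nf <;>
    simp [Complex.I_sq]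

lemma pauli_zz : pauliMat 2 * pauliMat 2 = 1 := by
  ext i j; fin_cases i <;> fin_cases j <;>
    simp [pauliMat, Matrix.mul_apply, Fin.sum_univ_two, Matrix.one_apply]

lemma pauli_xy : pauliMat 1 * pauliMat 3 = Complex.I • pauliMat 2 := by
  ext i j; fin_cases i <;> fin_cases j <;>
    simp [pauliMat, Matrix.mul_apply, Fin.sum_univ_two]

lemma pauli_yx : pauliMat 3 * pauliMat 1 = (-Complex.I) • pauliMat 2 := by
  ext i j; fin_cases i <;> fin_cases j <;>
    simp [pauliMat, Matrix.mul_apply, Fin.sum_univ_two]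

lemma pauli_xz : pauliMat 1 * pauliMat 2 = (-Complex.I) • pauliMat 3 := by
  ext i j; fin_cases i <;> fin_cases j <;>
    simp [pauliMat, Matrix.mul_apply, Fin.sum_univ_two] <;> ring_nf <;> simp [Complex.I_sq]

lemma pauli_zx : pauliMat 2 * pauliMat 1 = Complex.I • pauliMat 3 := by
  ext i j; fin_cases i <;> fin_cases j <;>
    simp [pauliMat, Matrix.mul_apply, Fin.sum_univ_two] <;> ring_nf <;> simp [Complex.I_sq]

lemma pauli_yz : pauliMat 3 * pauliMat 2 = Complex.I • pauliMat 1 := by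
  ext i j; fin_cases i <;> fin_cases j <;>
    simp [pauliMat, Matrix.mul_apply, Fin.sum_univ_two]

lemma pauli_zy : pauliMat 2 * pauliMat 3 = (-Complex.I) • pauliMat 1 := by
  ext i j; fin_cases i <;> fin_cases j <;>
    simp [pauliMat, Matrix.mul_apply, Fin.sum_univ_two]

lemma I_pow_two_mul (α : ℕ) : Complex.I ^ (2 * α) = (-1 : ℂ) ^ α := by
  rw [pow_mul, Complex.I_sq]

lemma negI_pow_two_mul (α : ℕ) : (-Complex.I) ^ (2 * α) = (-1 : ℂ) ^ α := by
  rw [pow_mul, neg_pow, Complex.I_sq]; ring_nf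

lemma zeta_sq (α : ℕ) : zeta α * zeta α =
    (4 : ℂ)⁻¹ • ((4 : ℂ) • (1 : Matrix (QIdx (2*α)) (QIdx (2*α)) ℂ) +
      ((2 : ℂ) + 2 * (-1 : ℂ) ^ α) • (kronPow (pauliMat 1) (2*α) +
        kronPow (pauliMat 3) (2*α) + kronPow (pauliMat 2) (2*α))) := by
  unfold zeta
  rw [smul_mul_smul_comm]
  simp only [add_mul, mul_add, kronPow_mul, one_mul, mul_one,
    pauli_xx, pauli_yy, pauli_zz, pauli_xy, pauli_yx, pauli_xz, pauli_zx,
    pauli_yz, pauli_zy, kronPow_smul, I_pow_two_mul, negI_pow_two_mul, kronPow_one]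
  match_scalars <;> ring

/-- if `α` is odd then `ζ_α² = I`, so its eigenvalues lie in
`{+1, -1}`; if `α` is even then `ζ_α² = 2ζ_α`, so `ζ_α/2` is a projector and
its eigenvalues lie in `{0, 2}`. -/
theorem zeta_squared (α : ℕ) (hα : 1 ≤ α) :
    (Odd α → zeta α * zeta α = 1 ∧ spectrum ℂ (zeta α) ⊆ {1, -1}) ∧
    (Even α → zeta α * zeta α = (2:ℂ) • zeta α ∧ spectrum ℂ (zeta α) ⊆ {0, 2}) := by
  constructor
  · intro hodd
    have hsq : zeta α * zeta α = 1 := by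
      rw [zeta_sq, hodd.neg_one_pow]
      match_scalars <;> ring
    refine ⟨hsq, spec_subset_of_quad _ 1 (-1) ?_⟩
    have : (zeta α - (1:ℂ) • 1) * (zeta α - (-1:ℂ) • 1)
        = zeta α * zeta α - 1 := by
      simp only [sub_mul, mul_sub, smul_mul_assoc, mul_smul_comm, smul_smul,
        mul_one, one_mul]
      match_scalars <;> ring
    rw [this, hsq, sub_self]
  · intro heven
    have hsq : zeta α * zeta α = (2:ℂ) • zeta α := by
      rw [zeta_sq, heven.neg_one_pow]
      unfold zeta
      rw [kronPow_one]
      match_scalars <;> ring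
    refine ⟨hsq, spec_subset_of_quad _ 0 2 ?_⟩
    have : (zeta α - (0:ℂ) • 1) * (zeta α - (2:ℂ) • 1)
        = zeta α * zeta α - (2:ℂ) • zeta α := by
      simp only [sub_mul, mul_sub, smul_mul_assoc, mul_smul_comm, smul_smul,
        mul_one, one_mul]
      match_scalars <;> ring
    rw [this, hsq, sub_self]

end
end
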